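/- Let K = ℝ₊ × ℝ₋ × ℝ₊ × ℝ₋ ⊂ ℝ^4 and let b be the cost function above. Then the Fenchel conjugate of b̂ = b + ι_{ℝ×K} is the indicator function of the set C = {(α,β) ∈ ℝ × ℝ^4 : α + |P_K β|^{q'}/q' ≤ 0}, where P_K denotes Euclidean projection onto K. -/

import Mathlib

open scoped BigOperators Pointwise
open Classical

noncomputable section

/-- Euclidean norm on ℝ⁴. -/
def nrm4 (w : Fin 4 → ℝ) : ℝ := Real.sqrt (∑ i, (w i) ^ 2)

/-- The cone `K = ℝ₊ × ℝ₋ × ℝ₊ × ℝ₋`. -/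
def Kset : Set (Fin 4 → ℝ) := {w | 0 ≤ w 0 ∧ w 1 ≤ 0 ∧ 0 ≤ w 2 ∧ w 3 ≤ 0}

/-- Euclidean projection onto `K`, computed componentwise. -/
def PK (w : Fin 4 → ℝ) : Fin 4 → ℝ := ![max (w 0) 0, min (w 1) 0, max (w 2) 0, min (w 3) 0]

/-- The cost function `b`. -/
def bfun (q : ℝ) (m : ℝ) (w : Fin 4 → ℝ) : EReal :=
  if 0 < m then (((nrm4 w ^ q) / (q * m ^ (q - 1)) : ℝ) : EReal)
  else if m = 0 ∧ w = 0 then (0 : EReal) else ⊤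

/-- `b̂ = b + ι_{ℝ × K}`. -/
def bhat (q : ℝ) (m : ℝ) (w : Fin 4 → ℝ) : EReal :=
  bfun q m w + (if w ∈ Kset then (0 : EReal) else ⊤)

lemma nrm4_nonneg (w : Fin 4 → ℝ) : 0 ≤ nrm4 w := Real.sqrt_nonneg _

lemma sq_nrm4 (w : Fin 4 → ℝ) : nrm4 w ^ 2 = ∑ i, (w i) ^ 2 :=
  Real.sq_sqrt (by positivity)

lemma nrm4_smul (s : ℝ) (hs : 0 ≤ s) (w : Fin 4 → ℝ) :
    nrm4 (fun i => s * w i) = s * nrm4 w := by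
  unfold nrm4
  rw [show (∑ i, (s * w i) ^ 2) = s ^ 2 * ∑ i, (w i) ^ 2 by
    rw [Finset.mul_sum]; exact Finset.sum_congr rfl fun i _ => by ring]
  rw [Real.sqrt_mul (sq_nonneg s), Real.sqrt_sq hs]

lemma nrm4_zero : nrm4 (0 : Fin 4 → ℝ) = 0 := by simp [nrm4]

lemma cs4 (x y : Fin 4 → ℝ) : ∑ i, x i * y i ≤ nrm4 x * nrm4 y :=
  Real.sum_mul_le_sqrt_mul_sqrt _ x y

lemma PK_mem (β : Fin 4 → ℝ) : PK β ∈ Kset := by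
  simp [PK, Kset, le_max_right, min_le_right]

lemma mul_max_self (x : ℝ) : x * max x 0 = max x 0 ^ 2 := by
  rcases le_total x 0 with h | h
  · simp [max_eq_right h]
  · simp [max_eq_left h, sq]

lemma mul_min_self (x : ℝ) : x * min x 0 = min x 0 ^ 2 := by
  rcases le_total x 0 with h | h
  · simp [min_eq_left h, sq]
  · simp [min_eq_right h]

lemma sum_mul_PK (β : Fin 4 → ℝ) : ∑ i, β i * PK β i = nrm4 (PK β) ^ 2 := by
  rw [sq_nrm4, Fin.sum_univ_four, Fin.sum_univ_four]
  simp only [PK, Matrix.cons_val_zero, Matrix.cons_val_one, Matrix.head_cons,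
    Matrix.cons_val_two, Matrix.tail_cons, Matrix.cons_val_three]
  rw [mul_max_self, mul_min_self, mul_max_self, mul_min_self]

lemma sum_le_PK {β w : Fin 4 → ℝ} (hw : w ∈ Kset) :
    ∑ i, β i * w i ≤ ∑ i, PK β i * w i := by
  obtain ⟨h0, h1, h2, h3⟩ := hw
  rw [Fin.sum_univ_four, Fin.sum_univ_four]
  simp only [PK, Matrix.cons_val_zero, Matrix.cons_val_one, Matrix.head_cons,
    Matrix.cons_val_two, Matrix.tail_cons, Matrix.cons_val_three]
  have a0 : β 0 * w 0 ≤ max (β 0) 0 * w 0 :=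
    mul_le_mul_of_nonneg_right (le_max_left _ _) h0
  have a1 : β 1 * w 1 ≤ min (β 1) 0 * w 1 :=
    mul_le_mul_of_nonpos_right (min_le_left _ _) h1
  have a2 : β 2 * w 2 ≤ max (β 2) 0 * w 2 :=
    mul_le_mul_of_nonneg_right (le_max_left _ _) h2
  have a3 : β 3 * w 3 ≤ min (β 3) 0 * w 3 :=
    mul_le_mul_of_nonpos_right (min_le_left _ _) h3
  linarith

lemma young4 {q q' a t m : ℝ} (hpq : q.HolderConjugate q') (ha : 0 ≤ a) (ht : 0 ≤ t)
    (hm : 0 < m) : a * t ≤ a ^ q' * m / q' + t ^ q / (q * m ^ (q - 1)) := by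
  have h := Real.young_inequality_of_nonneg
    (a := a * m ^ (1 / q')) (b := t * m ^ (-(1 / q')))
    (by positivity) (by positivity) hpq.symm
  have e1 : a * m ^ (1 / q') * (t * m ^ (-(1 / q'))) = a * t := by
    rw [mul_mul_mul_comm, ← Real.rpow_add hm]
    simp
  have e2 : (a * m ^ (1 / q')) ^ q' = a ^ q' * m := by
    rw [Real.mul_rpow ha (by positivity), ← Real.rpow_mul hm.le, one_div,
      inv_mul_cancel₀ hpq.symm.ne_zero, Real.rpow_one]
  have e3 : (t * m ^ (-(1 / q'))) ^ q = t ^ q * m ^ (-(q - 1)) := by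
    rw [Real.mul_rpow ht (by positivity), ← Real.rpow_mul hm.le]
    congr 2
    rw [neg_mul, mul_comm, mul_one_div, hpq.div_conj_eq_sub_one]
  rw [e1, e2, e3] at h
  have hmp : (0:ℝ) < m ^ (q - 1) := Real.rpow_pos_of_pos hm _
  have hmn : m ^ (-(q - 1)) = (m ^ (q - 1))⁻¹ := Real.rpow_neg hm.le _
  rw [hmn] at h
  have hq0 : (0:ℝ) < q := hpq.pos
  calc a * t ≤ a ^ q' * m / q' + t ^ q * (m ^ (q - 1))⁻¹ / q := h
    _ = a ^ q' * m / q' + t ^ q / (q * m ^ (q - 1)) := by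
        field_simp

lemma key1 {q q' α m : ℝ} {β w : Fin 4 → ℝ} (hpq : q.HolderConjugate q')
    (hm : 0 < m) (hw : w ∈ Kset) (hC : α + nrm4 (PK β) ^ q' / q' ≤ 0) :
    α * m + ∑ i, β i * w i ≤ nrm4 w ^ q / (q * m ^ (q - 1)) := by
  have h1 : ∑ i, β i * w i ≤ nrm4 (PK β) * nrm4 w :=
    (sum_le_PK hw).trans (cs4 _ _)
  have h2 := young4 hpq (nrm4_nonneg (PK β)) (nrm4_nonneg w) hm
  have h3 : m * (α + nrm4 (PK β) ^ q' / q') ≤ 0 :=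
    mul_nonpos_of_nonneg_of_nonpos hm.le hC
  have h3' : m * α + nrm4 (PK β) ^ q' * m / q' ≤ 0 := by
    have : m * (α + nrm4 (PK β) ^ q' / q') = m * α + nrm4 (PK β) ^ q' * m / q' := by ring
    linarith [this ▸ h3]
  linarith

lemma bfun_ne_bot (q m : ℝ) (w : Fin 4 → ℝ) : bfun q m w ≠ ⊥ := by
  unfold bfun; split_ifs <;> simp

lemma bhat_top_of_not_mem {q m : ℝ} {w : Fin 4 → ℝ} (hw : w ∉ Kset) :
    bhat q m w = ⊤ := by
  unfold bhat
  rw [if_neg hw]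
  unfold bfun
  split_ifs <;> simp [EReal.coe_add_top]

lemma bhat_pos {q m : ℝ} {w : Fin 4 → ℝ} (hm : 0 < m) (hw : w ∈ Kset) :
    bhat q m w = ((nrm4 w ^ q / (q * m ^ (q - 1)) : ℝ) : EReal) := by
  unfold bhat bfun
  rw [if_pos hm, if_pos hw, add_zero]

lemma bhat_zero (q : ℝ) : bhat q 0 0 = 0 := by
  unfold bhat bfun
  rw [if_neg (lt_irrefl 0), if_pos ⟨rfl, rfl⟩, if_pos (by simp [Kset]), add_zero]

lemma bhat_top_other {q m : ℝ} {w : Fin 4 → ℝ} (hm : ¬ 0 < m) (h0 : ¬ (m = 0 ∧ w = 0)) :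
    bhat q m w = ⊤ := by
  unfold bhat bfun
  rw [if_neg hm, if_neg h0]
  split_ifs <;> simp

/-- the Fenchel conjugate of `b̂` is the indicator function of
`C = {(α,β) : α + |P_K β|^{q'}/q' ≤ 0}`. -/
theorem stmt1 (q q' : ℝ) (hq : 1 < q) (hconj : 1 / q + 1 / q' = 1)
    (α : ℝ) (β : Fin 4 → ℝ) :
    (⨆ p : ℝ × (Fin 4 → ℝ),
        (((α * p.1 + ∑ i, β i * p.2 i : ℝ) : EReal) - bhat q p.1 p.2))
      = (if α + nrm4 (PK β) ^ q' / q' ≤ 0 then (0 : EReal) else ⊤) := by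
  have hpq : q.HolderConjugate q' := Real.holderConjugate_iff.mpr ⟨hq, by simpa [one_div] using hconj⟩
  set F : ℝ × (Fin 4 → ℝ) → EReal := fun p =>
    (((α * p.1 + ∑ i, β i * p.2 i : ℝ) : EReal) - bhat q p.1 p.2) with hF
  have hF00 : F (0, 0) = 0 := by
    show ((α * 0 + ∑ i, β i * (0 : Fin 4 → ℝ) i : ℝ) : EReal) - bhat q 0 0 = 0
    rw [bhat_zero]
    norm_num
  have hS0 : (0 : EReal) ≤ ⨆ p, F p := hF00 ▸ le_iSup F (0, 0)
  split_ifs with hC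
  · refine le_antisymm (iSup_le ?_) hS0
    rintro ⟨m, w⟩
    show ((α * m + ∑ i, β i * w i : ℝ) : EReal) - bhat q m w ≤ 0
    by_cases hw : w ∈ Kset
    · by_cases hm : 0 < m
      · rw [bhat_pos hm hw, ← EReal.coe_sub,
          show (0 : EReal) = ((0 : ℝ) : EReal) from rfl, EReal.coe_le_coe_iff]
        have := key1 hpq hm hw hC
        linarith
      · by_cases h0 : m = 0 ∧ w = 0
        · obtain ⟨rfl, rfl⟩ := h0
          rw [bhat_zero]
          norm_num
        · rw [bhat_top_other hm h0, EReal.sub_top]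
          exact bot_le
    · rw [bhat_top_of_not_mem hw, EReal.sub_top]
      exact bot_le
  · push_neg at hC
    set a := nrm4 (PK β) with haDef
    have hq'0 : 0 < q' := hpq.symm.pos
    have hq0 : 0 < q := hpq.pos
    have hcpos : 0 < α + a ^ q' / q' := hC
    have key : ∀ m : ℝ, 0 < m →
        (((m * (α + a ^ q' / q') : ℝ) : EReal) ≤ ⨆ p, F p) := by
      intro m hm
      rcases eq_or_lt_of_le (nrm4_nonneg (PK β)) with ha0 | ha0
      · -- a = 0
        have haz : a = 0 := ha0.symm
        have hFv : F (m, 0) = ((m * (α + a ^ q' / q') : ℝ) : EReal) := by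
          show ((α * m + ∑ i, β i * (0 : Fin 4 → ℝ) i : ℝ) : EReal) - bhat q m 0 = _
          rw [bhat_pos hm (by simp [Kset]), ← EReal.coe_sub]
          congr 1
          rw [nrm4_zero, Real.zero_rpow hq0.ne', haz, Real.zero_rpow hq'0.ne']
          simp
          ring
        exact hFv ▸ le_iSup F (m, 0)
      · -- a > 0
        set s := a ^ (q' - 2) * m with hsDef
        have hs : 0 < s := mul_pos (Real.rpow_pos_of_pos ha0 _) hm
        set w : Fin 4 → ℝ := fun i => s * PK β i with hwDef
        have hPK := PK_mem β
        have hwK : w ∈ Kset :=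
          ⟨mul_nonneg hs.le hPK.1,
           mul_nonpos_of_nonneg_of_nonpos hs.le hPK.2.1,
           mul_nonneg hs.le hPK.2.2.1,
           mul_nonpos_of_nonneg_of_nonpos hs.le hPK.2.2.2⟩
        have hsum : ∑ i, β i * w i = s * a ^ 2 := by
          rw [show (∑ i, β i * w i) = s * ∑ i, β i * PK β i by
            rw [Finset.mul_sum]; exact Finset.sum_congr rfl fun i _ => by
              show β i * (s * PK β i) = _; ring]
          rw [sum_mul_PK]
        have hnw : nrm4 w = s * a := nrm4_smul s hs.le _
        have h1 : s * a ^ 2 = a ^ q' * m := by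
          have e : a ^ (q' - 2) * a ^ ((2:ℕ):ℝ) = a ^ q' := by
            rw [← Real.rpow_add ha0]; norm_num; rfl
          rw [hsDef, show (a : ℝ) ^ (2:ℕ) = a ^ ((2:ℕ):ℝ) from (Real.rpow_natCast a 2).symm]
          calc a ^ (q' - 2) * m * a ^ ((2:ℕ):ℝ)
              = a ^ (q' - 2) * a ^ ((2:ℕ):ℝ) * m := by ring
            _ = a ^ q' * m := by rw [e]
        have hsa : s * a = a ^ (q' - 1) * m := by
          have e : a ^ (q' - 2) * a ^ (1:ℝ) = a ^ (q' - 1) := by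
            rw [← Real.rpow_add ha0]
            have : q' - 2 + 1 = q' - 1 := by ring
            rw [this]
          calc s * a = a ^ (q' - 2) * a ^ (1:ℝ) * m := by
                rw [hsDef, Real.rpow_one]; ring
            _ = a ^ (q' - 1) * m := by rw [e]
        have hq'q : (q' - 1) * q = q' := by linear_combination hpq.mul_eq_add
        have h2 : (s * a) ^ q = a ^ q' * m ^ q := by
          rw [hsa, Real.mul_rpow (Real.rpow_nonneg ha0.le _) hm.le,
            ← Real.rpow_mul ha0.le, hq'q]
        have hmq : m ^ (q - 1) * m = m ^ q := by
          calc m ^ (q - 1) * m = m ^ (q - 1) * m ^ (1:ℝ) := by rw [Real.rpow_one]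
            _ = m ^ (q - 1 + 1) := (Real.rpow_add hm _ _).symm
            _ = m ^ q := by norm_num
        have hMne : m ^ (q - 1) ≠ 0 := (Real.rpow_pos_of_pos hm _).ne'
        have hred : a ^ q' * m ^ q / (q * m ^ (q - 1)) = a ^ q' * m / q := by
          rw [← hmq]
          field_simp
        have hval : α * m + ∑ i, β i * w i - nrm4 w ^ q / (q * m ^ (q - 1))
            = m * (α + a ^ q' / q') := by
          rw [hsum, hnw, h1, h2, hred]
          linear_combination (-(a ^ q' * m)) * hconj
        have hFv : F (m, w) = ((m * (α + a ^ q' / q') : ℝ) : EReal) := by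
          show ((α * m + ∑ i, β i * w i : ℝ) : EReal) - bhat q m w = _
          rw [bhat_pos hm hwK, ← EReal.coe_sub]
          exact congrArg _ hval
        exact hFv ▸ le_iSup F (m, w)
    rw [EReal.eq_top_iff_forall_lt]
    intro y
    set c := α + a ^ q' / q' with hcDef
    set m := max ((y + 1) / c) 1 with hmDef
    have hm : 0 < m := lt_of_lt_of_le one_pos (le_max_right _ _)
    have hyc : y < m * c := by
      have h1 : (y + 1) / c ≤ m := le_max_left _ _
      have h2 : y + 1 ≤ m * c := (div_le_iff₀ hcpos).mp h1
      linarith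
    exact lt_of_lt_of_le (by exact_mod_cast hyc) (key m hm)
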